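/- arXiv:2603.06252 — 2 statements merged into one kernel-verified Lean document; each statement's English description precedes it below -/
import Mathlib

section
/- Let n ≥ 1, let c ∈ ℝⁿ be any fixed vector, and let ψ : ℝ → [0,1] be the triangle-wave activation ψ(x) = (1/π)·arccos(cos(2πx)). Define T : [0,1]ⁿ → [0,1]ⁿ component-wise by T(s)ᵢ = ψ(sᵢ + cᵢ). If S is a random vector uniformly distributed on the unit hypercube [0,1]ⁿ (i.e., its law is the Lebesgue/uniform probability measure on [0,1]ⁿ), then T(S) is also uniformly distributed on [0,1]ⁿ. Equivalently, the pushforward of the uniform probability measure on [0,1]ⁿ under T equals the uniform probability measure on [0,1]ⁿ. -/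
open MeasureTheory Real

/-- The triangle-wave activation `ψ(x) = (1/π) · arccos(cos(2πx))`. -/
noncomputable def triangleWave (x : ℝ) : ℝ := (1 / π) * arccos (cos (2 * π * x))

lemma triangleWave_periodic : Function.Periodic triangleWave 1 := by
  intro x
  unfold triangleWave
  rw [show 2 * π * (x + 1) = 2 * π * x + 2 * π by ring, Real.cos_add_two_pi]

lemma triangleWave_continuous : Continuous triangleWave := by
  unfold triangleWave
  exact continuous_const.mul (Real.continuous_arccos.comp (Real.continuous_cos.comp (continuous_const.mul continuous_id)))

lemma triangleWave_eq_abs {x : ℝ} (hx : |x| ≤ 1 / 2) : triangleWave x = 2 * |x| := by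
  have hπ := Real.pi_pos
  unfold triangleWave
  have h1 : Real.cos (2 * π * x) = Real.cos (2 * π * |x|) := by
    rcases abs_cases x with ⟨h, _⟩ | ⟨h, _⟩
    · rw [h]
    · rw [h, show 2 * π * -x = -(2 * π * x) by ring, Real.cos_neg]
  rw [h1, Real.arccos_cos (by positivity) (by nlinarith [abs_nonneg x])]
  field_simp

lemma map_tent :
    Measure.map (fun x : ℝ => 2 * |x|) (volume.restrict (Set.Ioc (-(1/2) : ℝ) (1/2))) =
      volume.restrict (Set.Icc (0:ℝ) 1) := by
  have hg : Measurable fun x : ℝ => 2 * |x| := measurable_const.mul measurable_abs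
  have hsplit : Set.Ioc (-(1/2):ℝ) (1/2) = Set.Ioc (-(1/2)) 0 ∪ Set.Ioc 0 (1/2) :=
    (Set.Ioc_union_Ioc_eq_Ioc (by norm_num) (by norm_num)).symm
  rw [hsplit, Measure.restrict_union (Set.Ioc_disjoint_Ioc_of_le le_rfl) measurableSet_Ioc,
    Measure.map_add _ _ hg]
  have h1 : Measure.map (fun x : ℝ => 2 * |x|) (volume.restrict (Set.Ioc (-(1/2)) 0)) =
      ENNReal.ofReal (1/2) • volume.restrict (Set.Ico (0:ℝ) 1) := by
    have he : (fun x : ℝ => 2 * |x|) =ᵐ[volume.restrict (Set.Ioc (-(1/2)) 0)]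
        fun x => (-2) * x := by
      filter_upwards [self_mem_ae_restrict measurableSet_Ioc] with x hx
      rw [abs_of_nonpos hx.2]; ring
    rw [Measure.map_congr he]
    have hpre : Set.Ioc (-(1/2):ℝ) 0 = (fun x : ℝ => (-2) * x) ⁻¹' (Set.Ico 0 1) := by
      ext x
      simp only [Set.mem_Ioc, Set.mem_preimage, Set.mem_Ico]
      constructor <;> rintro ⟨a, b⟩ <;> constructor <;> linarith
    rw [hpre, ← Measure.restrict_map (measurable_id'.const_mul _) measurableSet_Ico,
      Real.map_volume_mul_left (by norm_num : (-2:ℝ) ≠ 0)]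
    have : |((-2:ℝ))⁻¹| = 1/2 := by norm_num
    rw [this, Measure.restrict_smul]
  have h2 : Measure.map (fun x : ℝ => 2 * |x|) (volume.restrict (Set.Ioc 0 (1/2))) =
      ENNReal.ofReal (1/2) • volume.restrict (Set.Ioc (0:ℝ) 1) := by
    have he : (fun x : ℝ => 2 * |x|) =ᵐ[volume.restrict (Set.Ioc 0 (1/2))]
        fun x => (2:ℝ) * x := by
      filter_upwards [self_mem_ae_restrict measurableSet_Ioc] with x hx
      rw [abs_of_nonneg hx.1.le]
    rw [Measure.map_congr he]
    have hpre : Set.Ioc (0:ℝ) (1/2) = (fun x : ℝ => (2:ℝ) * x) ⁻¹' (Set.Ioc 0 1) := by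
      ext x
      simp only [Set.mem_Ioc, Set.mem_preimage]
      constructor <;> rintro ⟨a, b⟩ <;> constructor <;> linarith
    rw [hpre, ← Measure.restrict_map (measurable_id'.const_mul _) measurableSet_Ioc,
      Real.map_volume_mul_left (by norm_num : (2:ℝ) ≠ 0)]
    have : |((2:ℝ))⁻¹| = 1/2 := by norm_num
    rw [this, Measure.restrict_smul]
  rw [h1, h2, Measure.restrict_congr_set Ico_ae_eq_Icc, Measure.restrict_congr_set Ioc_ae_eq_Icc,
    ← add_smul, ← ENNReal.ofReal_add (by norm_num) (by norm_num)]
  norm_num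
instance : Fact ((0:ℝ) < 1) := ⟨one_pos⟩

/-- The triangle wave, descended to the circle. -/
noncomputable def psiBar : AddCircle (1:ℝ) → ℝ := triangleWave_periodic.lift

lemma psiBar_measurable : Measurable psiBar :=
  QuotientAddGroup.measurable_from_quotient.mpr triangleWave_continuous.measurable

lemma psiBar_coe (x : ℝ) : psiBar (x : AddCircle (1:ℝ)) = triangleWave x := rfl

lemma map_psiBar :
    Measure.map psiBar (volume : Measure (AddCircle (1:ℝ))) =
      volume.restrict (Set.Icc (0:ℝ) 1) := by
  have hmk := AddCircle.measurePreserving_mk (1:ℝ) (-(1/2))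
  rw [← hmk.map_eq, Measure.map_map psiBar_measurable AddCircle.measurable_mk']
  have hc : psiBar ∘ ((↑) : ℝ → AddCircle (1:ℝ)) = triangleWave := rfl
  have he : triangleWave =ᵐ[volume.restrict (Set.Ioc (-(1/2) : ℝ) (-(1/2) + 1))]
      fun x => 2 * |x| := by
    filter_upwards [self_mem_ae_restrict measurableSet_Ioc] with x hx
    refine triangleWave_eq_abs (abs_le.mpr ⟨by linarith [hx.1], by linarith [hx.2]⟩)
  rw [hc, Measure.map_congr he, show (-(1/2) : ℝ) + 1 = 1/2 by norm_num, map_tent]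

lemma oneD (c : ℝ) :
    Measure.map (fun x : ℝ => triangleWave (x + c)) (volume.restrict (Set.Icc (0:ℝ) 1)) =
      volume.restrict (Set.Icc (0:ℝ) 1) := by
  have hmk := AddCircle.measurePreserving_mk (1:ℝ) 0
  have hrot : Measurable fun y : AddCircle (1:ℝ) => y + (c : AddCircle (1:ℝ)) :=
    measurable_add_const _
  have h0 : (fun x : ℝ => triangleWave (x + c)) =
      psiBar ∘ ((fun y : AddCircle (1:ℝ) => y + (c : AddCircle (1:ℝ))) ∘
        ((↑) : ℝ → AddCircle (1:ℝ))) := by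
    funext x
    simp only [Function.comp_apply]
    rw [← QuotientAddGroup.mk_add, psiBar_coe]
  calc Measure.map (fun x : ℝ => triangleWave (x + c)) (volume.restrict (Set.Icc (0:ℝ) 1))
      = Measure.map (fun x : ℝ => triangleWave (x + c))
          (volume.restrict (Set.Ioc (0:ℝ) (0 + 1))) := by
        rw [zero_add, Measure.restrict_congr_set Ioc_ae_eq_Icc]
    _ = Measure.map psiBar (Measure.map (fun y : AddCircle (1:ℝ) => y + (c : AddCircle (1:ℝ)))
          (Measure.map ((↑) : ℝ → AddCircle (1:ℝ)) (volume.restrict (Set.Ioc (0:ℝ) (0 + 1))))) := by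
        rw [Measure.map_map hrot AddCircle.measurable_mk',
          Measure.map_map psiBar_measurable (hrot.comp AddCircle.measurable_mk'), ← h0]
    _ = volume.restrict (Set.Icc (0:ℝ) 1) := by
        rw [hmk.map_eq, (measurePreserving_add_right volume ((c : AddCircle (1:ℝ)))).map_eq,
          map_psiBar]

lemma pi_restrict (n : ℕ) :
    Measure.pi (fun _ : Fin n => volume.restrict (Set.Icc (0:ℝ) 1)) =
      (volume : Measure (Fin n → ℝ)).restrict (Set.univ.pi fun _ => Set.Icc (0:ℝ) 1) := by
  refine Measure.pi_eq fun s hs => ?_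
  rw [volume_pi, Measure.restrict_apply (MeasurableSet.univ_pi hs),
    ← Set.pi_inter_distrib, Measure.pi_pi]
  exact Finset.prod_congr rfl fun i _ => (Measure.restrict_apply (hs i)).symm

/-- Pushing forward the uniform probability measure on the unit hypercube `[0,1]ⁿ`
under the componentwise shifted triangle wave `T(s)ᵢ = ψ(sᵢ + cᵢ)` yields the uniform
probability measure on `[0,1]ⁿ` again. -/
theorem triangleWave_shift_preserves_uniform_cube
    (n : ℕ) (hn : 1 ≤ n) (c : Fin n → ℝ) :
    Measure.map (fun s : Fin n → ℝ => fun i => triangleWave (s i + c i))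
      (volume.restrict (Set.univ.pi fun _ : Fin n => Set.Icc (0 : ℝ) 1)) =
    volume.restrict (Set.univ.pi fun _ : Fin n => Set.Icc (0 : ℝ) 1) := by
  have h : ∀ i : Fin n, MeasurePreserving (fun x : ℝ => triangleWave (x + c i))
      (volume.restrict (Set.Icc (0:ℝ) 1)) (volume.restrict (Set.Icc (0:ℝ) 1)) :=
    fun i => ⟨(triangleWave_continuous.comp (continuous_add_right _)).measurable, oneD (c i)⟩
  have := measurePreserving_pi (fun _ : Fin n => volume.restrict (Set.Icc (0:ℝ) 1))
    (fun _ : Fin n => volume.restrict (Set.Icc (0:ℝ) 1)) h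
  rw [pi_restrict] at this
  exact this.map_eq
end

section
/- Let c ∈ ℝ be any fixed real number and let ψ : ℝ → [0,1] be the triangle-wave activation ψ(x) = (1/π)·arccos(cos(2πx)). If Y is a real random variable uniformly distributed on [0,1], then ψ(Y + c) is uniformly distributed on [0,1]; that is, the pushforward of the uniform probability measure on [0,1] under the map y ↦ ψ(y + c) is the uniform probability measure on [0,1]. -/
open MeasureTheory Real

lemma triangleWave_nonneg (x : ℝ) : 0 ≤ triangleWave x :=
  mul_nonneg (by positivity) (Real.arccos_nonneg _)

lemma triangleWave_le_one (x : ℝ) : triangleWave x ≤ 1 := by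
  have h := Real.arccos_le_pi (cos (2 * π * x))
  have hπ : (0:ℝ) < π := Real.pi_pos
  rw [triangleWave, div_mul_eq_mul_div, one_mul, div_le_one hπ]
  exact h

lemma triangleWave_eq_left {x : ℝ} (h0 : 0 ≤ x) (h1 : x ≤ 1/2) :
    triangleWave x = 2 * x := by
  have hπ : (0:ℝ) < π := Real.pi_pos
  have h0' : 0 ≤ 2 * π * x := by positivity
  have h1' : 2 * π * x ≤ π := by nlinarith
  rw [triangleWave, Real.arccos_cos h0' h1']
  field_simp

lemma triangleWave_eq_right {x : ℝ} (h0 : 1/2 ≤ x) (h1 : x ≤ 1) :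
    triangleWave x = 2 * (1 - x) := by
  have hπ : (0:ℝ) < π := Real.pi_pos
  have hc : cos (2 * π * x) = cos (2 * π * (1 - x)) := by
    have : 2 * π * (1 - x) = 2 * π - 2 * π * x := by ring
    rw [this, Real.cos_two_pi_sub]
  have h0' : 0 ≤ 2 * π * (1 - x) := by nlinarith
  have h1' : 2 * π * (1 - x) ≤ π := by nlinarith
  rw [triangleWave, hc, Real.arccos_cos h0' h1']
  field_simp

lemma triangleWave_iff {a x : ℝ} (ha0 : 0 ≤ a) (ha1 : a < 1)
    (hx : x ∈ Set.Icc (0:ℝ) 1) :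
    triangleWave x ≤ a ↔ x ≤ a/2 ∨ 1 - a/2 ≤ x := by
  obtain ⟨hx0, hx1⟩ := hx
  rcases le_or_gt x (1/2) with h | h
  · rw [triangleWave_eq_left hx0 h]
    constructor
    · intro hle; left; linarith
    · rintro (hle | hge) <;> linarith
  · rw [triangleWave_eq_right h.le hx1]
    constructor
    · intro hle; right; linarith
    · rintro (hle | hge) <;> linarith

/-- The sublevel sets of a 1-periodic measurable function have the same measure in every
interval of length one. -/
lemma vol_periodic_Icc {f : ℝ → ℝ} (hf : Function.Periodic f 1) (hm : Measurable f)
    (a t : ℝ) :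
    volume (f ⁻¹' Set.Iic a ∩ Set.Icc t (t + 1)) =
      volume (f ⁻¹' Set.Iic a ∩ Set.Icc 0 1) := by
  set S : Set ℝ := f ⁻¹' Set.Iic a with hSdef
  have hS : MeasurableSet S := hm measurableSet_Iic
  have hperZ : ∀ (n : ℤ) (x : ℝ), f (x + (n : ℝ)) = f x := by
    intro n x
    have := (hf.int_mul n) x
    rwa [mul_one] at this
  set n : ℤ := ⌈t⌉ with hn
  have h1 : t ≤ (n : ℝ) := Int.le_ceil t
  have h2 : (n : ℝ) ≤ t + 1 := (Int.ceil_lt_add_one t).le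
  -- step A : split [t, t+1] at n
  have split1 : S ∩ Set.Icc t (t + 1) =
      (S ∩ Set.Icc t (n : ℝ)) ∪ (S ∩ Set.Icc (n : ℝ) (t + 1)) := by
    rw [← Set.inter_union_distrib_left, Set.Icc_union_Icc_eq_Icc h1 h2]
  have hAB : volume ((S ∩ Set.Icc t (n : ℝ)) ∩ (S ∩ Set.Icc (n : ℝ) (t + 1))) = 0 := by
    refine measure_mono_null ?_ (Real.volume_singleton (a := (n : ℝ)))
    rintro x ⟨⟨-, -, hx1⟩, -, hx2, -⟩
    exact Set.mem_singleton_iff.2 (le_antisymm hx1 hx2)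
  have hu1 : volume (S ∩ Set.Icc t (t + 1)) =
      volume (S ∩ Set.Icc t (n : ℝ)) + volume (S ∩ Set.Icc (n : ℝ) (t + 1)) := by
    rw [split1]
    have h := measure_union_add_inter (μ := volume) (S ∩ Set.Icc t (n : ℝ))
      (hS.inter measurableSet_Icc : MeasurableSet (S ∩ Set.Icc (n : ℝ) (t + 1)))
    rwa [hAB, add_zero] at h
  -- step B : translate the first piece by 1
  have hB : volume (S ∩ Set.Icc t (n : ℝ)) =
      volume (S ∩ Set.Icc (t + 1) ((n : ℝ) + 1)) := by
    have hpre : (fun x : ℝ => x + 1) ⁻¹' (S ∩ Set.Icc (t + 1) ((n : ℝ) + 1)) =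
        S ∩ Set.Icc t (n : ℝ) := by
      ext x
      have hx1 : f (x + 1) = f x := hf x
      simp only [Set.mem_preimage, Set.mem_inter_iff, Set.mem_Icc, hSdef, Set.mem_Iic, hx1]
      constructor <;> rintro ⟨u, v, w⟩ <;> exact ⟨u, by linarith, by linarith⟩
    rw [← hpre, measure_preimage_add_right]
  -- step C : recombine into [n, n+1]
  have hAB2 : volume ((S ∩ Set.Icc (n : ℝ) (t + 1)) ∩
      (S ∩ Set.Icc (t + 1) ((n : ℝ) + 1))) = 0 := by
    refine measure_mono_null ?_ (Real.volume_singleton (a := t + 1))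
    rintro x ⟨⟨-, -, hx1⟩, -, hx2, -⟩
    exact Set.mem_singleton_iff.2 (le_antisymm hx1 hx2)
  have hu2 : volume (S ∩ Set.Icc (n : ℝ) ((n : ℝ) + 1)) =
      volume (S ∩ Set.Icc (n : ℝ) (t + 1)) + volume (S ∩ Set.Icc (t + 1) ((n : ℝ) + 1)) := by
    have split2 : S ∩ Set.Icc (n : ℝ) ((n : ℝ) + 1) =
        (S ∩ Set.Icc (n : ℝ) (t + 1)) ∪ (S ∩ Set.Icc (t + 1) ((n : ℝ) + 1)) := by
      rw [← Set.inter_union_distrib_left, Set.Icc_union_Icc_eq_Icc h2 (by linarith)]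
    rw [split2]
    have h := measure_union_add_inter (μ := volume) (S ∩ Set.Icc (n : ℝ) (t + 1))
      (hS.inter measurableSet_Icc : MeasurableSet (S ∩ Set.Icc (t + 1) ((n : ℝ) + 1)))
    rwa [hAB2, add_zero] at h
  -- step D : translate [n, n+1] back to [0, 1]
  have hD : volume (S ∩ Set.Icc (n : ℝ) ((n : ℝ) + 1)) = volume (S ∩ Set.Icc 0 1) := by
    have hpre : (fun x : ℝ => x + (n : ℝ)) ⁻¹' (S ∩ Set.Icc (n : ℝ) ((n : ℝ) + 1)) =
        S ∩ Set.Icc 0 1 := by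
      ext x
      have hx1 : f (x + (n : ℝ)) = f x := hperZ n x
      simp only [Set.mem_preimage, Set.mem_inter_iff, Set.mem_Icc, hSdef, Set.mem_Iic, hx1]
      constructor <;> rintro ⟨u, v, w⟩ <;> exact ⟨u, by linarith, by linarith⟩
    rw [← hpre, measure_preimage_add_right]
  rw [hu1, hB, add_comm, ← hu2, hD]

/-- If `Y` is uniformly distributed on `[0,1]`, then for any fixed shift `c`,
`ψ(Y + c)` is again uniformly distributed on `[0,1]`: the pushforward of the uniform
probability measure on `[0,1]` under `y ↦ ψ(y + c)` is that same uniform measure. -/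
theorem triangleWave_shift_preserves_uniform (c : ℝ) :
    Measure.map (fun y : ℝ => triangleWave (y + c))
      (volume.restrict (Set.Icc (0 : ℝ) 1)) =
    volume.restrict (Set.Icc (0 : ℝ) 1) := by
  have hmf : Measurable fun y : ℝ => triangleWave (y + c) :=
    (triangleWave_continuous.comp (continuous_id.add continuous_const)).measurable
  have hψm : Measurable triangleWave := triangleWave_continuous.measurable
  refine Measure.ext_of_Iic _ _ (fun a => ?_)
  rw [Measure.map_apply hmf measurableSet_Iic, Measure.restrict_apply measurableSet_Iic,
    Measure.restrict_apply (hmf measurableSet_Iic)]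
  rcases lt_or_ge a 0 with ha | ha0
  · have h1 : (fun y : ℝ => triangleWave (y + c)) ⁻¹' Set.Iic a = ∅ := by
      ext x
      simp only [Set.mem_preimage, Set.mem_Iic, Set.mem_empty_iff_false, iff_false, not_le]
      exact lt_of_lt_of_le ha (triangleWave_nonneg _)
    have h2 : Set.Iic a ∩ Set.Icc (0:ℝ) 1 = ∅ := by
      ext x
      simp only [Set.mem_inter_iff, Set.mem_Iic, Set.mem_Icc, Set.mem_empty_iff_false, iff_false]
      rintro ⟨hx, hx0, -⟩
      linarith
    rw [h1, h2, Set.empty_inter]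
  rcases le_or_gt 1 a with ha1 | ha1
  · have h1 : (fun y : ℝ => triangleWave (y + c)) ⁻¹' Set.Iic a ∩ Set.Icc (0:ℝ) 1 =
        Set.Icc 0 1 := by
      refine Set.inter_eq_right.2 (fun x _ => ?_)
      exact le_trans (triangleWave_le_one _) ha1
    have h2 : Set.Iic a ∩ Set.Icc (0:ℝ) 1 = Set.Icc 0 1 := by
      refine Set.inter_eq_right.2 (fun x hx => ?_)
      exact le_trans hx.2 ha1
    rw [h1, h2]
  · -- main case : 0 ≤ a < 1
    have hRHS : Set.Iic a ∩ Set.Icc (0:ℝ) 1 = Set.Icc 0 a := by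
      ext x
      simp only [Set.mem_inter_iff, Set.mem_Iic, Set.mem_Icc]
      constructor
      · rintro ⟨h, h0, -⟩; exact ⟨h0, h⟩
      · rintro ⟨h0, h⟩; exact ⟨h, h0, by linarith⟩
    -- LHS : translate by c, then use periodicity
    have hshift : (fun y : ℝ => triangleWave (y + c)) ⁻¹' Set.Iic a ∩ Set.Icc (0:ℝ) 1 =
        (fun y : ℝ => y + c) ⁻¹' (triangleWave ⁻¹' Set.Iic a ∩ Set.Icc c (c + 1)) := by
      ext x
      simp only [Set.mem_inter_iff, Set.mem_preimage, Set.mem_Iic, Set.mem_Icc]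
      constructor <;> rintro ⟨u, v, w⟩ <;> exact ⟨u, by linarith, by linarith⟩
    rw [hshift, measure_preimage_add_right,
      vol_periodic_Icc triangleWave_periodic hψm a c, hRHS]
    -- compute the sublevel set on [0,1]
    have hset : triangleWave ⁻¹' Set.Iic a ∩ Set.Icc (0:ℝ) 1 =
        Set.Icc 0 (a/2) ∪ Set.Icc (1 - a/2) 1 := by
      ext x
      simp only [Set.mem_inter_iff, Set.mem_preimage, Set.mem_Iic, Set.mem_Icc, Set.mem_union]
      constructor
      · rintro ⟨hle, hx0, hx1⟩
        rcases (triangleWave_iff ha0 ha1 ⟨hx0, hx1⟩).mp hle with h | h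
        · exact Or.inl ⟨hx0, h⟩
        · exact Or.inr ⟨h, hx1⟩
      · rintro (⟨hx0, hx⟩ | ⟨hx, hx1⟩)
        · have hx1 : x ≤ 1 := by linarith
          exact ⟨(triangleWave_iff ha0 ha1 ⟨hx0, hx1⟩).mpr (Or.inl hx), hx0, hx1⟩
        · have hx0 : (0:ℝ) ≤ x := by linarith
          exact ⟨(triangleWave_iff ha0 ha1 ⟨hx0, hx1⟩).mpr (Or.inr hx), hx0, hx1⟩
    rw [hset]
    have hdisj : Disjoint (Set.Icc (0:ℝ) (a/2)) (Set.Icc (1 - a/2) 1) := by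
      rw [Set.disjoint_left]
      rintro x ⟨-, hx1⟩ ⟨hx2, -⟩
      linarith
    rw [measure_union hdisj measurableSet_Icc, Real.volume_Icc, Real.volume_Icc,
      Real.volume_Icc, ← ENNReal.ofReal_add (by linarith) (by linarith)]
    congr 1
    ring
end
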